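/- Let N, K be positive integers, let C be a real N×N matrix, let s be a nonnegative real number, and define J(X, Y) = (1/2)·‖C − X·Yᵀ‖_F² + (s/2)·‖X − Y‖_F² for N×K real matrices X, Y. Then for any fixed N×K real matrix Y, the map X ↦ ∇_X J(X, Y) = (X·Yᵀ − C)·Y + s·(X − Y) is globally Lipschitz continuous with respect to the Frobenius norm, with Lipschitz constant L₁(Y) = ‖Yᵀ·Y + s·I_K‖₂, i.e., for all N×K real matrices X, X' it holds that ‖∇_X J(X, Y) − ∇_X J(X', Y)‖_F ≤ ‖Yᵀ·Y + s·I_K‖₂ · ‖X − X'‖_F. -/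

import Mathlib

open Matrix

/-- The Frobenius norm of a real matrix. -/
noncomputable def frobNorm {N K : ℕ} (A : Matrix (Fin N) (Fin K) ℝ) : ℝ :=
  Real.sqrt (∑ i, ∑ k, (A i k) ^ 2)

/-- The spectral norm (operator 2-norm, i.e. largest singular value) of a real
square matrix, as the operator norm of the induced map on Euclidean space. -/
noncomputable def matSpectralNorm {K : ℕ} (M : Matrix (Fin K) (Fin K) ℝ) : ℝ :=
  ‖LinearMap.toContinuousLinearMap (Matrix.toEuclideanLin M)‖

lemma norm_sq_euclidean {K : ℕ} (v : Fin K → ℝ) :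
    ‖(WithLp.equiv 2 (Fin K → ℝ)).symm v‖ ^ 2 = ∑ k, (v k) ^ 2 := by
  rw [EuclideanSpace.norm_eq, Real.sq_sqrt (by positivity)]
  simp [sq_abs]

lemma frob_mul_le {N K : ℕ} (D : Matrix (Fin N) (Fin K) ℝ)
    (M : Matrix (Fin K) (Fin K) ℝ) (hM : Mᵀ = M) :
    frobNorm (D * M) ≤ matSpectralNorm M * frobNorm D := by
  have hs0 : 0 ≤ matSpectralNorm M := norm_nonneg _
  have hkey : ∑ i, ∑ k, ((D * M) i k) ^ 2 ≤
      (matSpectralNorm M) ^ 2 * ∑ i, ∑ k, (D i k) ^ 2 := by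
    rw [Finset.mul_sum]
    refine Finset.sum_le_sum fun i _ => ?_
    have hrow : ∀ k, (D * M) i k = (M *ᵥ (D i)) k := by
      intro k
      rw [Matrix.mul_apply, Matrix.mulVec, dotProduct]
      refine Finset.sum_congr rfl fun j _ => ?_
      rw [mul_comm]
      conv_lhs => rw [← hM]
      rw [Matrix.transpose_apply]
    calc ∑ k, ((D * M) i k) ^ 2 = ∑ k, ((M *ᵥ (D i)) k) ^ 2 := by
          refine Finset.sum_congr rfl fun k _ => by rw [hrow]
      _ = ‖(WithLp.equiv 2 (Fin K → ℝ)).symm (M *ᵥ (D i))‖ ^ 2 :=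
          (norm_sq_euclidean _).symm
      _ = ‖(LinearMap.toContinuousLinearMap (Matrix.toEuclideanLin M))
            ((WithLp.equiv 2 (Fin K → ℝ)).symm (D i))‖ ^ 2 := rfl
      _ ≤ (matSpectralNorm M * ‖(WithLp.equiv 2 (Fin K → ℝ)).symm (D i)‖) ^ 2 := by
          apply pow_le_pow_left₀ (norm_nonneg _)
          exact (LinearMap.toContinuousLinearMap (Matrix.toEuclideanLin M)).le_opNorm _
      _ = (matSpectralNorm M) ^ 2 * ∑ k, (D i k) ^ 2 := by
          rw [mul_pow, norm_sq_euclidean]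
  have h1 : frobNorm (D * M) = Real.sqrt (∑ i, ∑ k, ((D * M) i k) ^ 2) := rfl
  have h2 : matSpectralNorm M * frobNorm D =
      Real.sqrt ((matSpectralNorm M) ^ 2 * ∑ i, ∑ k, (D i k) ^ 2) := by
    rw [Real.sqrt_mul (by positivity), Real.sqrt_sq hs0]; rfl
  rw [h1, h2]
  exact Real.sqrt_le_sqrt hkey

theorem gradX_lipschitz (N K : ℕ) (hN : 0 < N) (hK : 0 < K)
    (C : Matrix (Fin N) (Fin N) ℝ) (s : ℝ) (hs : 0 ≤ s)
    (Y : Matrix (Fin N) (Fin K) ℝ) :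
    ∀ X X' : Matrix (Fin N) (Fin K) ℝ,
      frobNorm (((X * Yᵀ - C) * Y + s • (X - Y)) - ((X' * Yᵀ - C) * Y + s • (X' - Y)))
        ≤ matSpectralNorm (Yᵀ * Y + s • (1 : Matrix (Fin K) (Fin K) ℝ)) * frobNorm (X - X') := by
  intro X X'
  have hM : (Yᵀ * Y + s • (1 : Matrix (Fin K) (Fin K) ℝ))ᵀ
      = Yᵀ * Y + s • (1 : Matrix (Fin K) (Fin K) ℝ) := by
    simp [Matrix.transpose_add, Matrix.transpose_mul, Matrix.transpose_smul]
  have heq : ((X * Yᵀ - C) * Y + s • (X - Y)) - ((X' * Yᵀ - C) * Y + s • (X' - Y))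
      = (X - X') * (Yᵀ * Y + s • (1 : Matrix (Fin K) (Fin K) ℝ)) := by
    simp only [Matrix.sub_mul, Matrix.mul_add, Matrix.mul_one, smul_sub,
      Matrix.mul_smul, Matrix.mul_assoc]
    abel
  rw [heq]
  exact frob_mul_le _ _ hM
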